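/- arXiv:1111.6603 — 2 statements merged into one kernel-verified Lean document; each statement's English description precedes it below -/
import Mathlib

section
/- The operators d and d† commute with the traceless (sl(4)) parts of both gl(4) copies; precisely, for all 1 ≤ α, β ≤ 4: [K^+_{αβ}, d] = δ_{αβ} d, [K^-_{αβ}, d] = −δ_{αβ} d, [K^+_{αβ}, d†] = −δ_{αβ} d†, and [K^-_{αβ}, d†] = δ_{αβ} d† as endomorphisms of R. In particular [K^±_{αβ}, d] = [K^±_{αβ}, d†] = 0 whenever α ≠ β. -/
noncomputable section

open scoped BigOperators

/-- The polynomial ring `R = ℂ[x_{αβ} : 1 ≤ α, β ≤ 4]` in 16 commuting variables. -/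
abbrev R4 : Type := MvPolynomial (Fin 4 × Fin 4) ℂ

/-- The operator of multiplication by the variable `x_{a b}` on `R`. -/
def XOp (a b : Fin 4) : Module.End ℂ R4 :=
  LinearMap.mulLeft ℂ (MvPolynomial.X (a, b))

/-- The partial derivative operator `∂/∂x_{a b}` on `R`. -/
def DOp (a b : Fin 4) : Module.End ℂ R4 :=
  (MvPolynomial.pderiv (a, b)).toLinearMap

/-- `K^+_{αβ} := Σ_γ x_{βγ} ∂/∂x_{αγ}`. -/
def Kp (a b : Fin 4) : Module.End ℂ R4 := ∑ c : Fin 4, XOp b c * DOp a c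

/-- `K^-_{αβ} := −Σ_γ x_{γβ} ∂/∂x_{γα}`. -/
def Km (a b : Fin 4) : Module.End ℂ R4 := -∑ c : Fin 4, XOp c b * DOp c a

/-- `d` : the operator of multiplication by `det((x_{αβ}))` on `R`. -/
def dOp : Module.End ℂ R4 :=
  LinearMap.mulLeft ℂ (Matrix.det (Matrix.of fun a b : Fin 4 => MvPolynomial.X (a, b)))

/-- `d†` : the determinant of the 4×4 matrix of operators whose `(α,β)` entry is `∂/∂x_{βα}`,
written as the usual signed sum over permutations (any ordering of the factors in each product
gives the same operator, since partial derivative operators commute). -/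
def ddagOp : Module.End ℂ R4 :=
  ∑ σ : Equiv.Perm (Fin 4),
    (Equiv.Perm.sign σ : ℤ) • (List.ofFn fun a : Fin 4 => DOp (σ a) a).prod


open MvPolynomial

lemma lie_mul' (x y z : Module.End ℂ R4) : ⁅x, y * z⁆ = ⁅x, y⁆ * z + y * ⁅x, z⁆ := by
  simp only [Ring.lie_def, mul_sub, sub_mul, mul_assoc]; abel

lemma mul_lie' (x y z : Module.End ℂ R4) : ⁅x * y, z⁆ = x * ⁅y, z⁆ + ⁅x, z⁆ * y := by
  simp only [Ring.lie_def, mul_sub, sub_mul, mul_assoc]; abel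

lemma lie_sum' {ι : Type*} (s : Finset ι) (x : Module.End ℂ R4) (f : ι → Module.End ℂ R4) :
    ⁅x, ∑ i ∈ s, f i⁆ = ∑ i ∈ s, ⁅x, f i⁆ := by
  simp only [Ring.lie_def, Finset.mul_sum, Finset.sum_mul, ← Finset.sum_sub_distrib]

lemma neg_lie' (x y : Module.End ℂ R4) : ⁅-x, y⁆ = -⁅x, y⁆ := by
  apply LinearMap.ext; intro p
  simp only [Ring.lie_def, LinearMap.sub_apply, LinearMap.neg_apply, Module.End.mul_apply, map_neg]
  abel

lemma lie_zsmul' (x : Module.End ℂ R4) (n : ℤ) (y : Module.End ℂ R4) :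
    ⁅x, n • y⁆ = n • ⁅x, y⁆ := by
  simp only [Ring.lie_def, mul_smul_comm, smul_mul_assoc, smul_sub]

lemma sum_lie' {ι : Type*} (s : Finset ι) (f : ι → Module.End ℂ R4) (x : Module.End ℂ R4) :
    ⁅∑ i ∈ s, f i, x⁆ = ∑ i ∈ s, ⁅f i, x⁆ := by
  simp only [Ring.lie_def, Finset.mul_sum, Finset.sum_mul, ← Finset.sum_sub_distrib]

lemma pderiv_comm' (u v : Fin 4 × Fin 4) (p : R4) :
    pderiv u (pderiv v p) = pderiv v (pderiv u p) := by
  induction p using MvPolynomial.induction_on with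
  | C a => simp
  | add p q hp hq => simp [hp, hq]
  | mul_X p n hp =>
      rcases eq_or_ne n u with rfl | hu <;> rcases eq_or_ne n v with rfl | hv <;>
        (simp [pderiv_mul, hp, *]; try ring)

lemma lie_D_D (i j k l : Fin 4) : ⁅DOp i j, DOp k l⁆ = 0 :=
  LinearMap.ext fun p => by
    simp [Ring.lie_def, DOp, pderiv_comm']

lemma commute_D (i j k l : Fin 4) : Commute (DOp i j) (DOp k l) := by
  have h := lie_D_D i j k l
  rw [Ring.lie_def, sub_eq_zero] at h
  exact h

lemma commute_X (i j k l : Fin 4) : Commute (XOp i j) (XOp k l) :=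
  LinearMap.ext fun p => by
    simp [XOp, Module.End.mul_apply]
    ring

lemma lie_D_X (i j k l : Fin 4) :
    ⁅DOp i j, XOp k l⁆ = if (i, j) = (k, l) then (1 : Module.End ℂ R4) else 0 := by
  apply LinearMap.ext; intro p
  simp only [Ring.lie_def, LinearMap.sub_apply, Module.End.mul_apply, DOp, XOp,
    Derivation.coeFn_coe, LinearMap.mulLeft_apply, pderiv_mul]
  split_ifs with h
  · rcases Prod.mk.injEq .. ▸ h with ⟨h1, h2⟩
    subst h1; subst h2
    simp
  · have : (k, l) ≠ (i, j) := fun hh => h hh.symm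
    simp [pderiv_X_of_ne this]

lemma lie_X_D (i j k l : Fin 4) :
    ⁅XOp i j, DOp k l⁆ = -(if (k, l) = (i, j) then (1 : Module.End ℂ R4) else 0) := by
  have h := lie_D_X k l i j
  rw [Ring.lie_def] at h ⊢
  rw [← h, neg_sub]

lemma lie_Kp_D (a b k l : Fin 4) :
    ⁅Kp a b, DOp k l⁆ = -(if k = b then DOp a l else 0) := by
  rw [Kp, sum_lie']
  have h : ∀ c : Fin 4, ⁅XOp b c * DOp a c, DOp k l⁆
      = -(if k = b ∧ l = c then DOp a c else 0) := by
    intro c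
    rw [mul_lie', lie_D_D, mul_zero, zero_add, lie_X_D]
    simp only [Prod.mk.injEq]
    split_ifs with h <;> first | simp | rfl
  simp only [h]
  rcases eq_or_ne k b with rfl | hk
  · simp [Finset.sum_ite_eq]
  · simp [hk]

lemma lie_Km_D (a b k l : Fin 4) :
    ⁅Km a b, DOp k l⁆ = if l = b then DOp k a else 0 := by
  rw [Km, neg_lie', sum_lie']
  have h : ∀ c : Fin 4, ⁅XOp c b * DOp c a, DOp k l⁆
      = -(if k = c ∧ l = b then DOp c a else 0) := by
    intro c
    rw [mul_lie', lie_D_D, mul_zero, zero_add, lie_X_D]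
    simp only [Prod.mk.injEq]
    split_ifs with h <;> first | simp | rfl
  simp only [h, Finset.sum_neg_distrib, neg_neg]
  rcases eq_or_ne l b with rfl | hl
  · simp [Finset.sum_ite_eq]
  · simp [hl]

lemma lie_Kp_X (a b k l : Fin 4) :
    ⁅Kp a b, XOp k l⁆ = if k = a then XOp b l else 0 := by
  rw [Kp, sum_lie']
  have h : ∀ c : Fin 4, ⁅XOp b c * DOp a c, XOp k l⁆
      = if k = a ∧ l = c then XOp b c else 0 := by
    intro c
    rw [mul_lie', lie_D_X]; simp only [Prod.mk.injEq]
    have hc : ⁅XOp b c, XOp k l⁆ = 0 := by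
      rw [Ring.lie_def, sub_eq_zero]; exact commute_X b c k l
    rw [hc, zero_mul, add_zero]
    have : (a = k ∧ c = l) ↔ (k = a ∧ l = c) := by constructor <;> rintro ⟨rfl, rfl⟩ <;> exact ⟨rfl, rfl⟩
    rw [if_congr this rfl rfl]
    split_ifs with h
    · simp
    · simp
  simp only [h]
  rcases eq_or_ne k a with rfl | hk
  · simp [Finset.sum_ite_eq]
  · simp [hk]

lemma lie_Km_X (a b k l : Fin 4) :
    ⁅Km a b, XOp k l⁆ = -(if l = a then XOp k b else 0) := by
  rw [Km, neg_lie', sum_lie']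
  have h : ∀ c : Fin 4, ⁅XOp c b * DOp c a, XOp k l⁆
      = if k = c ∧ l = a then XOp c b else 0 := by
    intro c
    rw [mul_lie', lie_D_X]; simp only [Prod.mk.injEq]
    have hc : ⁅XOp c b, XOp k l⁆ = 0 := by
      rw [Ring.lie_def, sub_eq_zero]; exact commute_X c b k l
    rw [hc, zero_mul, add_zero]
    have : (c = k ∧ a = l) ↔ (k = c ∧ l = a) := by constructor <;> rintro ⟨rfl, rfl⟩ <;> exact ⟨rfl, rfl⟩
    rw [if_congr this rfl rfl]
    split_ifs with h
    · simp
    · simp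
  simp only [h]
  rcases eq_or_ne l a with rfl | hl
  · simp [Finset.sum_ite_eq]
  · simp [hl]

def ProdD (f g : Fin 4 → Fin 4) : Module.End ℂ R4 := (List.ofFn fun i => DOp (f i) (g i)).prod
def ProdX (f g : Fin 4 → Fin 4) : Module.End ℂ R4 := (List.ofFn fun i => XOp (f i) (g i)).prod

lemma ProdD_eq (f g : Fin 4 → Fin 4) :
    ProdD f g = DOp (f 0) (g 0) * (DOp (f 1) (g 1) * (DOp (f 2) (g 2) * DOp (f 3) (g 3))) := by
  simp [ProdD, List.ofFn_succ]

lemma ProdX_eq (f g : Fin 4 → Fin 4) :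
    ProdX f g = XOp (f 0) (g 0) * (XOp (f 1) (g 1) * (XOp (f 2) (g 2) * XOp (f 3) (g 3))) := by
  simp [ProdX, List.ofFn_succ]

lemma prod_ofFn_perm {g : Fin 4 → Module.End ℂ R4} (hg : ∀ i j, Commute (g i) (g j))
    (π : Equiv.Perm (Fin 4)) :
    (List.ofFn fun j => g (π j)).prod = (List.ofFn g).prod := by
  refine List.Perm.prod_eq' ?_ ?_
  · exact π.ofFn_comp_perm g
  · refine List.pairwise_of_forall_mem_list ?_
    intro x hx y hy
    rw [List.mem_ofFn] at hx hy
    obtain ⟨i, rfl⟩ := hx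
    obtain ⟨j, rfl⟩ := hy
    exact hg _ _

lemma lie_Kp_ProdD (a b : Fin 4) (σ : Equiv.Perm (Fin 4)) :
    ⁅Kp a b, ProdD ⇑σ id⁆ = -ProdD (Function.update ⇑σ (σ.symm b) a) id := by
  have hσ : ∀ i : Fin 4, (σ i = b) ↔ (i = σ.symm b) := fun i =>
    σ.apply_eq_iff_eq_symm_apply
  obtain ⟨m, hm⟩ : ∃ m, σ.symm b = m := ⟨_, rfl⟩
  simp only [hm] at hσ ⊢
  rw [ProdD_eq, ProdD_eq, lie_mul', lie_mul', lie_mul',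
    lie_Kp_D, lie_Kp_D, lie_Kp_D, lie_Kp_D]
  simp only [hσ, id_eq]
  fin_cases m <;> simp [Function.update] <;> try (apply LinearMap.ext; intro p; simp [Module.End.mul_apply])

lemma lie_Kp_ProdX (a b : Fin 4) (σ : Equiv.Perm (Fin 4)) :
    ⁅Kp a b, ProdX ⇑σ id⁆ = ProdX (Function.update ⇑σ (σ.symm a) b) id := by
  have hσ : ∀ i : Fin 4, (σ i = a) ↔ (i = σ.symm a) := fun i =>
    σ.apply_eq_iff_eq_symm_apply
  obtain ⟨m, hm⟩ : ∃ m, σ.symm a = m := ⟨_, rfl⟩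
  simp only [hm] at hσ ⊢
  rw [ProdX_eq, ProdX_eq, lie_mul', lie_mul', lie_mul',
    lie_Kp_X, lie_Kp_X, lie_Kp_X, lie_Kp_X]
  simp only [hσ, id_eq]
  fin_cases m <;> simp [Function.update] <;> try (apply LinearMap.ext; intro p; simp [Module.End.mul_apply])

lemma lie_Km_ProdD (a b : Fin 4) (σ : Equiv.Perm (Fin 4)) :
    ⁅Km a b, ProdD ⇑σ id⁆ = ProdD ⇑σ (Function.update id b a) := by
  rw [ProdD_eq, ProdD_eq, lie_mul', lie_mul', lie_mul',
    lie_Km_D, lie_Km_D, lie_Km_D, lie_Km_D]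
  simp only [id_eq]
  fin_cases b <;> simp [Function.update] <;> try (apply LinearMap.ext; intro p; simp [Module.End.mul_apply])

lemma lie_Km_ProdX (a b : Fin 4) (σ : Equiv.Perm (Fin 4)) :
    ⁅Km a b, ProdX ⇑σ id⁆ = -ProdX ⇑σ (Function.update id a b) := by
  rw [ProdX_eq, ProdX_eq, lie_mul', lie_mul', lie_mul',
    lie_Km_X, lie_Km_X, lie_Km_X, lie_Km_X]
  simp only [id_eq]
  fin_cases a <;> simp [Function.update] <;> try (apply LinearMap.ext; intro p; simp [Module.End.mul_apply])

lemma ddag_eq : ddagOp = ∑ σ : Equiv.Perm (Fin 4), (Equiv.Perm.sign σ : ℤ) • ProdD ⇑σ id := rfl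

lemma dOp_eq : dOp = ∑ σ : Equiv.Perm (Fin 4), (Equiv.Perm.sign σ : ℤ) • ProdX ⇑σ id := by
  apply LinearMap.ext; intro p
  rw [dOp, LinearMap.mulLeft_apply, Matrix.det_apply, LinearMap.sum_apply, Finset.sum_mul]
  refine Finset.sum_congr rfl fun σ _ => ?_
  rw [LinearMap.smul_apply, ProdX_eq]
  simp only [Module.End.mul_apply, XOp, LinearMap.mulLeft_apply, Matrix.of_apply,
    Fin.prod_univ_four, Units.smul_def, zsmul_eq_mul, id_eq]
  ring

lemma symm_ne_symm (σ : Equiv.Perm (Fin 4)) {a b : Fin 4} (hab : a ≠ b) :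
    σ.symm a ≠ σ.symm b := fun h => hab (σ.symm.injective h)

lemma sign_swap_trans (σ : Equiv.Perm (Fin 4)) {u v : Fin 4} (huv : u ≠ v) :
    Equiv.Perm.sign ((Equiv.swap u v).trans σ) = -Equiv.Perm.sign σ := by
  have : (Equiv.swap u v).trans σ = σ * Equiv.swap u v := rfl
  rw [this, map_mul, Equiv.Perm.sign_swap huv, mul_neg, mul_one]

lemma gsymm_a (σ : Equiv.Perm (Fin 4)) {a b : Fin 4} (hab : a ≠ b) :
    ((Equiv.swap (σ.symm a) (σ.symm b)).trans σ).symm a = σ.symm b := by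
  rw [Equiv.symm_trans_apply, Equiv.symm_swap, Equiv.swap_apply_left]

lemma gsymm_b (σ : Equiv.Perm (Fin 4)) {a b : Fin 4} (hab : a ≠ b) :
    ((Equiv.swap (σ.symm a) (σ.symm b)).trans σ).symm b = σ.symm a := by
  rw [Equiv.symm_trans_apply, Equiv.symm_swap, Equiv.swap_apply_right]

lemma g_invol (σ : Equiv.Perm (Fin 4)) {a b : Fin 4} (hab : a ≠ b) :
    (Equiv.swap ((((Equiv.swap (σ.symm a) (σ.symm b)).trans σ)).symm a)
        ((((Equiv.swap (σ.symm a) (σ.symm b)).trans σ)).symm b)).trans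
      ((Equiv.swap (σ.symm a) (σ.symm b)).trans σ) = σ := by
  rw [gsymm_a σ hab, gsymm_b σ hab]
  ext x
  simp only [Equiv.trans_apply]
  rw [Equiv.swap_comm]
  rw [Equiv.swap_apply_self]

lemma g_ne (σ : Equiv.Perm (Fin 4)) {a b : Fin 4} (hab : a ≠ b) :
    (Equiv.swap (σ.symm a) (σ.symm b)).trans σ ≠ σ := by
  intro h
  apply hab
  have h2 : ((Equiv.swap (σ.symm a) (σ.symm b)).trans σ) (σ.symm b) = σ (σ.symm b) := by rw [h]
  rw [Equiv.trans_apply, Equiv.swap_apply_right, Equiv.apply_symm_apply,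
    Equiv.apply_symm_apply] at h2
  exact h2

lemma upd_eq_upd (σ : Equiv.Perm (Fin 4)) {a b : Fin 4} (hab : a ≠ b) :
    Function.update ⇑((Equiv.swap (σ.symm a) (σ.symm b)).trans σ) (σ.symm a) a
      = Function.update ⇑σ (σ.symm b) a := by
  have huv : σ.symm a ≠ σ.symm b := symm_ne_symm σ hab
  funext j
  rcases eq_or_ne j (σ.symm a) with rfl | hju
  · rw [Function.update_self, Function.update_of_ne huv, Equiv.apply_symm_apply]
  · rcases eq_or_ne j (σ.symm b) with rfl | hjv
    · rw [Function.update_self, Function.update_of_ne hju, Equiv.trans_apply,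
        Equiv.swap_apply_right, Equiv.apply_symm_apply]
    · rw [Function.update_of_ne hju, Function.update_of_ne hjv, Equiv.trans_apply,
        Equiv.swap_apply_of_ne_of_ne hju hjv]

lemma upd_id_swap {x y : Fin 4} (h : y ≠ x) (j : Fin 4) :
    Function.update id x y (Equiv.swap y x j) = Function.update id x y j := by
  rcases eq_or_ne j y with rfl | hjy
  · rw [Equiv.swap_apply_left, Function.update_self, Function.update_of_ne h]; rfl
  · rcases eq_or_ne j x with rfl | hjx
    · rw [Equiv.swap_apply_right, Function.update_self, Function.update_of_ne h]; rfl
    · rw [Equiv.swap_apply_of_ne_of_ne hjy hjx]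

lemma update_symm_self (σ : Equiv.Perm (Fin 4)) (a : Fin 4) :
    Function.update ⇑σ (σ.symm a) a = ⇑σ := by
  funext j
  rcases eq_or_ne j (σ.symm a) with rfl | hj
  · rw [Function.update_self, Equiv.apply_symm_apply]
  · rw [Function.update_of_ne hj]

lemma update_id_self (a : Fin 4) : Function.update (id : Fin 4 → Fin 4) a a = id := by
  funext j
  rcases eq_or_ne j a with rfl | hj
  · rw [Function.update_self]; rfl
  · rw [Function.update_of_ne hj]

lemma key_Kp_ddag (a b : Fin 4) :
    ⁅Kp a b, ddagOp⁆ = -((if a = b then (1 : ℂ) else 0) • ddagOp) := by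
  rw [ddag_eq, lie_sum']
  simp only [lie_zsmul', lie_Kp_ProdD, smul_neg]
  rcases eq_or_ne a b with rfl | hab
  · rw [if_pos rfl, one_smul, ← Finset.sum_neg_distrib]
    refine Finset.sum_congr rfl fun σ _ => ?_
    rw [update_symm_self]
  · rw [if_neg hab, zero_smul, neg_zero, Finset.sum_neg_distrib, neg_eq_zero]
    refine Finset.sum_ninvolution
      (fun σ => (Equiv.swap (σ.symm a) (σ.symm b)).trans σ) ?_ ?_ (fun _ => Finset.mem_univ _) ?_
    · intro σ
      rw [gsymm_b σ hab, upd_eq_upd σ hab, sign_swap_trans σ (symm_ne_symm σ hab)]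
      simp [neg_smul]
    · intro σ _
      exact g_ne σ hab
    · intro σ
      exact g_invol σ hab

lemma key_Kp_dOp (a b : Fin 4) :
    ⁅Kp a b, dOp⁆ = (if a = b then (1 : ℂ) else 0) • dOp := by
  rw [dOp_eq, lie_sum']
  simp only [lie_zsmul', lie_Kp_ProdX]
  rcases eq_or_ne a b with rfl | hab
  · rw [if_pos rfl, one_smul]
    refine Finset.sum_congr rfl fun σ _ => ?_
    rw [update_symm_self]
  · rw [if_neg hab, zero_smul]
    refine Finset.sum_ninvolution
      (fun σ => (Equiv.swap (σ.symm a) (σ.symm b)).trans σ) ?_ ?_ (fun _ => Finset.mem_univ _) ?_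
    · intro σ
      have h1 : Equiv.swap (σ.symm a) (σ.symm b) = Equiv.swap (σ.symm b) (σ.symm a) :=
        Equiv.swap_comm _ _
      have h2 : Function.update ⇑((Equiv.swap (σ.symm a) (σ.symm b)).trans σ)
          (((Equiv.swap (σ.symm a) (σ.symm b)).trans σ).symm a) b
          = Function.update ⇑σ (σ.symm a) b := by
        rw [gsymm_a σ hab, h1]
        exact upd_eq_upd σ hab.symm
      rw [h2, sign_swap_trans σ (symm_ne_symm σ hab)]
      simp [neg_smul]
    · intro σ _
      exact g_ne σ hab
    · intro σ
      exact g_invol σ hab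

lemma key_Km_ddag (a b : Fin 4) :
    ⁅Km a b, ddagOp⁆ = (if a = b then (1 : ℂ) else 0) • ddagOp := by
  rw [ddag_eq, lie_sum']
  simp only [lie_zsmul', lie_Km_ProdD]
  rcases eq_or_ne a b with rfl | hab
  · rw [if_pos rfl, one_smul, update_id_self]
  · rw [if_neg hab, zero_smul]
    refine Finset.sum_ninvolution
      (fun σ => (Equiv.swap a b).trans σ) ?_ ?_ (fun _ => Finset.mem_univ _) ?_
    · intro σ
      have h2 : ProdD ⇑((Equiv.swap a b).trans σ) (Function.update id b a)
          = ProdD ⇑σ (Function.update id b a) := by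
        have h1 : (fun i => DOp (((Equiv.swap a b).trans σ) i) (Function.update id b a i))
            = fun i => (fun j => DOp (σ j) (Function.update id b a j)) (Equiv.swap a b i) := by
          funext i
          simp only [Equiv.trans_apply]
          rw [upd_id_swap hab i]
        unfold ProdD
        rw [h1]
        exact prod_ofFn_perm (fun i j => commute_D _ _ _ _) (Equiv.swap a b)
      rw [h2, sign_swap_trans σ hab]
      simp [neg_smul]
    · intro σ _ h
      apply hab
      have h' : (Equiv.swap a b).trans σ = σ := h
      have h2 : ((Equiv.swap a b).trans σ) a = σ a := by rw [h']
      rw [Equiv.trans_apply, Equiv.swap_apply_left] at h2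
      exact (σ.injective h2).symm
    · intro σ
      ext x
      simp only [Equiv.trans_apply, Equiv.swap_apply_self]

lemma key_Km_dOp (a b : Fin 4) :
    ⁅Km a b, dOp⁆ = -((if a = b then (1 : ℂ) else 0) • dOp) := by
  rw [dOp_eq, lie_sum']
  simp only [lie_zsmul', lie_Km_ProdX, smul_neg]
  rcases eq_or_ne a b with rfl | hab
  · rw [if_pos rfl, one_smul, ← Finset.sum_neg_distrib, update_id_self]
  · rw [if_neg hab, zero_smul, neg_zero, Finset.sum_neg_distrib, neg_eq_zero]
    refine Finset.sum_ninvolution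
      (fun σ => (Equiv.swap a b).trans σ) ?_ ?_ (fun _ => Finset.mem_univ _) ?_
    · intro σ
      have h2 : ProdX ⇑((Equiv.swap a b).trans σ) (Function.update id a b)
          = ProdX ⇑σ (Function.update id a b) := by
        have h1 : (fun i => XOp (((Equiv.swap a b).trans σ) i) (Function.update id a b i))
            = fun i => (fun j => XOp (σ j) (Function.update id a b j)) (Equiv.swap a b i) := by
          funext i
          simp only [Equiv.trans_apply]
          rw [Equiv.swap_comm, upd_id_swap hab.symm i]
        unfold ProdX
        rw [h1]
        exact prod_ofFn_perm (fun i j => commute_X _ _ _ _) (Equiv.swap a b)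
      rw [h2, sign_swap_trans σ hab]
      simp [neg_smul]
    · intro σ _ h
      apply hab
      have h' : (Equiv.swap a b).trans σ = σ := h
      have h2 : ((Equiv.swap a b).trans σ) a = σ a := by rw [h']
      rw [Equiv.trans_apply, Equiv.swap_apply_left] at h2
      exact (σ.injective h2).symm
    · intro σ
      ext x
      simp only [Equiv.trans_apply, Equiv.swap_apply_self]


/-- `[K^+_{αβ}, d] = δ_{αβ} d`, `[K^-_{αβ}, d] = −δ_{αβ} d`,
`[K^+_{αβ}, d†] = −δ_{αβ} d†`, `[K^-_{αβ}, d†] = δ_{αβ} d†`; in particular all these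
commutators vanish when `α ≠ β`, i.e. `d` and `d†` commute with the traceless (`sl(4)`)
parts of both `gl(4)` copies. -/
theorem statement5 :
    (∀ a b : Fin 4,
      ⁅Kp a b, dOp⁆ = (if a = b then (1 : ℂ) else 0) • dOp ∧
      ⁅Km a b, dOp⁆ = -((if a = b then (1 : ℂ) else 0) • dOp) ∧
      ⁅Kp a b, ddagOp⁆ = -((if a = b then (1 : ℂ) else 0) • ddagOp) ∧
      ⁅Km a b, ddagOp⁆ = (if a = b then (1 : ℂ) else 0) • ddagOp) ∧
    (∀ a b : Fin 4, a ≠ b →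
      ⁅Kp a b, dOp⁆ = 0 ∧ ⁅Km a b, dOp⁆ = 0 ∧
      ⁅Kp a b, ddagOp⁆ = 0 ∧ ⁅Km a b, ddagOp⁆ = 0) := by
  constructor
  · exact fun a b => ⟨key_Kp_dOp a b, key_Km_dOp a b, key_Kp_ddag a b, key_Km_ddag a b⟩
  · intro a b hab
    refine ⟨?_, ?_, ?_, ?_⟩
    · rw [key_Kp_dOp, if_neg hab, zero_smul]
    · rw [key_Km_dOp, if_neg hab, zero_smul, neg_zero]
    · rw [key_Kp_ddag, if_neg hab, zero_smul, neg_zero]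
    · rw [key_Km_ddag, if_neg hab, zero_smul]
end
end

section
/- For any nonnegative integers a_1, a_2, a_3, a_4 with a_1 + 2a_2 + 3a_3 + 4a_4 = n, the monomial v_1^{a_1} v_2^{a_2} v_3^{a_3} v_4^{a_4} is a homogeneous polynomial of degree n in R and is a simultaneous highest-weight vector: K^+_{αβ}(v_1^{a_1} v_2^{a_2} v_3^{a_3} v_4^{a_4}) = 0 for all β > α, and K^-_{αβ}(v_1^{a_1} v_2^{a_2} v_3^{a_3} v_4^{a_4}) = 0 for all β < α. -/
noncomputable section

open scoped BigOperators

/-- For `i : Fin 4` (representing the paper's index `i+1 ∈ {1,2,3,4}`), `v i` is the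
determinant of the `(i+1)×(i+1)` matrix `B` with entries `B_{ab} = x_{5−a,b}`
(`1 ≤ a, b ≤ i+1`, written 0-indexed as `x_{(3−a)(b)}`). -/
def v (i : Fin 4) : R4 :=
  Matrix.det (Matrix.of fun a b : Fin (i.val + 1) =>
    MvPolynomial.X (⟨3 - a.val, by omega⟩, ⟨b.val, by have := b.isLt; have := i.isLt; omega⟩))


open MvPolynomial in
lemma Kp_apply (a b : Fin 4) (p : R4) :
    Kp a b p = ∑ c : Fin 4, X (b, c) * pderiv (a, c) p := by
  simp [Kp, XOp, DOp, LinearMap.sum_apply, Module.End.mul_apply]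

open MvPolynomial in
lemma Km_apply (a b : Fin 4) (p : R4) :
    Km a b p = -∑ c : Fin 4, X (c, b) * pderiv (c, a) p := by
  simp [Km, XOp, DOp, LinearMap.sum_apply, Module.End.mul_apply]

open MvPolynomial in
/-- `Kp a b` as a derivation. -/
def rowD (a b : Fin 4) : Derivation ℂ R4 R4 where
  toLinearMap := Kp a b
  map_one_eq_zero' := by
    show Kp a b 1 = 0
    simp [Kp_apply]
  leibniz' p q := by
    show Kp a b (p * q) = p • Kp a b q + q • Kp a b p
    simp only [Kp_apply, pderiv_mul, smul_eq_mul, Finset.mul_sum, mul_add,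
      ← Finset.sum_add_distrib]
    refine Finset.sum_congr rfl fun c _ => ?_
    ring

open MvPolynomial in
/-- `-(Km a b)` as a derivation. -/
def colD (a b : Fin 4) : Derivation ℂ R4 R4 where
  toLinearMap := -(Km a b)
  map_one_eq_zero' := by
    show -(Km a b 1) = 0
    simp [Km_apply]
  leibniz' p q := by
    show -(Km a b (p * q)) = p • -(Km a b q) + q • -(Km a b p)
    simp only [Km_apply, neg_neg, pderiv_mul, smul_eq_mul, Finset.mul_sum, mul_add,
      ← Finset.sum_add_distrib]
    refine Finset.sum_congr rfl fun c _ => ?_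
    ring

lemma rowD_apply (a b : Fin 4) (p : R4) : rowD a b p = Kp a b p := rfl
lemma colD_apply (a b : Fin 4) (p : R4) : colD a b p = -(Km a b p) := by
  show (-(Km a b)) p = _
  simp

open MvPolynomial in
lemma rowD_X (a b : Fin 4) (r c : Fin 4) :
    rowD a b (X (r, c)) = if r = a then X (b, c) else 0 := by
  rw [rowD_apply, Kp_apply]
  rcases eq_or_ne r a with h | h
  · subst h
    rw [Finset.sum_eq_single c]
    · simp
    · intro d _ hd
      rw [pderiv_X_of_ne (by simp [hd.symm]), mul_zero]
    · simp
  · rw [if_neg h]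
    refine Finset.sum_eq_zero fun d _ => ?_
    rw [pderiv_X_of_ne (by simp [h]), mul_zero]

open MvPolynomial in
lemma colD_X (a b : Fin 4) (r c : Fin 4) :
    colD a b (X (r, c)) = if c = a then X (r, b) else 0 := by
  rw [colD_apply, Km_apply, neg_neg]
  rcases eq_or_ne c a with h | h
  · subst h
    rw [Finset.sum_eq_single r]
    · simp
    · intro d _ hd
      rw [pderiv_X_of_ne (by simp [hd.symm]), mul_zero]
    · simp
  · rw [if_neg h]
    refine Finset.sum_eq_zero fun d _ => ?_
    rw [pderiv_X_of_ne (by simp [h]), mul_zero]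

lemma D_prod (D : Derivation ℂ R4 R4) {ι : Type} [DecidableEq ι] (s : Finset ι) (f : ι → R4) :
    D (∏ i ∈ s, f i) = ∑ i ∈ s, (∏ j ∈ s.erase i, f j) * D (f i) := by
  induction s using Finset.induction with
  | empty => simp
  | @insert a s ha ih =>
    rw [Finset.prod_insert ha, D.leibniz, smul_eq_mul, smul_eq_mul, ih,
      Finset.sum_insert ha, Finset.erase_insert ha, Finset.mul_sum]
    rw [add_comm]
    congr 1
    refine Finset.sum_congr rfl fun i hi => ?_
    rw [Finset.erase_insert_of_ne (by rintro rfl; exact ha hi),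
      Finset.prod_insert (fun hm => ha (Finset.mem_of_mem_erase hm))]
    ring

open Matrix in
lemma D_det_col {m : ℕ} (D : Derivation ℂ R4 R4) (M : Matrix (Fin m) (Fin m) R4) :
    D M.det = ∑ k : Fin m, (M.updateCol k fun j => D (M j k)).det := by
  classical
  rw [det_apply', map_sum]
  have hterm : ∀ σ : Equiv.Perm (Fin m),
      D (Equiv.Perm.sign σ * ∏ i, M (σ i) i) =
        ∑ k : Fin m, (Equiv.Perm.sign σ : R4) *
          ((∏ i ∈ Finset.univ.erase k, M (σ i) i) * D (M (σ k) k)) := by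
    intro σ
    have : ((Equiv.Perm.sign σ : ℤ) : R4) = MvPolynomial.C ((Equiv.Perm.sign σ : ℤ) : ℂ) := by
      rfl
    rw [this, MvPolynomial.C_mul', D.map_smul, D_prod, Finset.smul_sum]
    refine Finset.sum_congr rfl fun k _ => ?_
    rw [MvPolynomial.C_mul']
  rw [Finset.sum_congr rfl fun σ _ => hterm σ, Finset.sum_comm]
  refine Finset.sum_congr rfl fun k _ => ?_
  rw [det_apply']
  refine Finset.sum_congr rfl fun σ _ => ?_
  congr 1
  rw [← Finset.mul_prod_erase _ _ (Finset.mem_univ k), updateCol_self, mul_comm]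
  congr 1
  refine Finset.prod_congr rfl fun i hi => ?_
  rw [updateCol_ne (Finset.ne_of_mem_erase hi)]

open Matrix in
lemma D_det_row {m : ℕ} (D : Derivation ℂ R4 R4) (M : Matrix (Fin m) (Fin m) R4) :
    D M.det = ∑ k : Fin m, (M.updateRow k fun j => D (M k j)).det := by
  rw [← det_transpose M, D_det_col D Mᵀ]
  refine Finset.sum_congr rfl fun k _ => ?_
  rw [Matrix.updateCol_transpose, det_transpose]
  rfl
open MvPolynomial Matrix in
lemma rowD_v (a b : Fin 4) (hab : a < b) (i : Fin 4) : rowD a b (v i) = 0 := by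
  have hi3 : i.val ≤ 3 := by omega
  rw [v, D_det_row]
  refine Finset.sum_eq_zero fun k _ => ?_
  have hk : k.val ≤ i.val := by omega
  by_cases hka : 3 - k.val = a.val
  · -- the differentiated row equals row of `b`, which is another row of the matrix
    have hb3 : b.val ≤ 3 := by omega
    have hab' : a.val < b.val := hab
    have hk1 : 3 - b.val < i.val + 1 := by omega
    set k₁ : Fin (i.val + 1) := ⟨3 - b.val, hk1⟩ with hk₁
    have hne : k₁ ≠ k := by
      intro hcontra
      have : (3 - b.val) = k.val := congrArg Fin.val hcontra
      omega
    refine det_zero_of_row_eq hne.symm ?_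
    funext c
    rw [updateRow_self, updateRow_ne hne]
    have h1 : ((⟨3 - k.val, by omega⟩ : Fin 4) : Fin 4) = a := Fin.ext hka
    rw [of_apply, of_apply]
    show rowD a b (X (⟨3 - k.val, by omega⟩, ⟨c.val, by omega⟩)) = _
    rw [rowD_X, if_pos h1]
    congr 1
    refine Prod.ext (Fin.ext ?_) rfl
    show b.val = 3 - (3 - b.val)
    omega
  · refine det_eq_zero_of_row_eq_zero k fun c => ?_
    rw [updateRow_self]
    show rowD a b (X (⟨3 - k.val, by omega⟩, ⟨c.val, by omega⟩)) = 0
    rw [rowD_X, if_neg]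
    intro hcontra
    exact hka (congrArg Fin.val hcontra)

open MvPolynomial Matrix in
lemma colD_v (a b : Fin 4) (hba : b < a) (i : Fin 4) : colD a b (v i) = 0 := by
  rw [v, D_det_col]
  refine Finset.sum_eq_zero fun k _ => ?_
  have hk : k.val ≤ i.val := by omega
  by_cases hka : k.val = a.val
  · have hba' : b.val < a.val := hba
    have hk1 : b.val < i.val + 1 := by omega
    set k₁ : Fin (i.val + 1) := ⟨b.val, hk1⟩ with hk₁
    have hne : k₁ ≠ k := by
      intro hcontra
      have : b.val = k.val := congrArg Fin.val hcontra
      omega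
    refine det_zero_of_column_eq hne.symm fun j => ?_
    rw [updateCol_self, updateCol_ne hne]
    have h1 : ((⟨k.val, by omega⟩ : Fin 4) : Fin 4) = a := Fin.ext hka
    rw [of_apply, of_apply]
    show colD a b (X (⟨3 - j.val, by omega⟩, ⟨k.val, by omega⟩)) = _
    rw [colD_X, if_pos h1]
  · refine det_eq_zero_of_column_eq_zero k fun j => ?_
    rw [updateCol_self]
    show colD a b (X (⟨3 - j.val, by omega⟩, ⟨k.val, by omega⟩)) = 0
    rw [colD_X, if_neg]
    intro hcontra
    exact hka (congrArg Fin.val hcontra)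

open MvPolynomial in
lemma v_hom (i : Fin 4) : (v i).IsHomogeneous (i.val + 1) := by
  rw [v, Matrix.det_apply']
  refine MvPolynomial.IsHomogeneous.sum _ _ _ fun σ _ => ?_
  have h2 : (∏ j : Fin (i.val + 1),
      MvPolynomial.X (R := ℂ) ((⟨3 - (σ j).val, by omega⟩ : Fin 4),
        (⟨j.val, by omega⟩ : Fin 4))).IsHomogeneous (i.val + 1) := by
    have := MvPolynomial.IsHomogeneous.prod Finset.univ
      (fun j : Fin (i.val + 1) => MvPolynomial.X (R := ℂ) ((⟨3 - (σ j).val, by omega⟩ : Fin 4),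
        (⟨j.val, by omega⟩ : Fin 4)))
      (fun _ => 1) (fun j _ => MvPolynomial.isHomogeneous_X _ _)
    simpa using this
  have h3 : ((Equiv.Perm.sign σ : ℤ) : R4) = MvPolynomial.C ((Equiv.Perm.sign σ : ℤ) : ℂ) := rfl
  rw [h3]
  exact h2.C_mul _

/-- for nonnegative integers `a₁,a₂,a₃,a₄` with `a₁+2a₂+3a₃+4a₄ = n`
(here `e : Fin 4 → ℕ`, `∑ (i+1)·e i = n`), the monomial `v₁^{a₁} v₂^{a₂} v₃^{a₃} v₄^{a₄}`
is homogeneous of degree `n` and is a simultaneous highest-weight vector: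
`K^+_{αβ}` kills it for `β > α` and `K^-_{αβ}` kills it for `β < α`. -/
theorem statement13 (e : Fin 4 → ℕ) (n : ℕ) (h : ∑ i : Fin 4, (i.val + 1) * e i = n) :
    MvPolynomial.IsHomogeneous (∏ i : Fin 4, v i ^ e i) n ∧
    (∀ a b : Fin 4, a < b → Kp a b (∏ i : Fin 4, v i ^ e i) = 0) ∧
    (∀ a b : Fin 4, b < a → Km a b (∏ i : Fin 4, v i ^ e i) = 0) := by
  subst h
  refine ⟨?_, ?_, ?_⟩
  · exact MvPolynomial.IsHomogeneous.prod _ _ _ fun i _ => (v_hom i).pow (e i)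
  · intro a b hab
    have h0 : rowD a b (∏ i : Fin 4, v i ^ e i) = 0 := by
      rw [D_prod]
      refine Finset.sum_eq_zero fun i _ => ?_
      rw [Derivation.leibniz_pow, rowD_v a b hab i, smul_zero, smul_zero, mul_zero]
    exact h0
  · intro a b hba
    have h0 : colD a b (∏ i : Fin 4, v i ^ e i) = 0 := by
      rw [D_prod]
      refine Finset.sum_eq_zero fun i _ => ?_
      rw [Derivation.leibniz_pow, colD_v a b hba i, smul_zero, smul_zero, mul_zero]
    rw [colD_apply] at h0
    exact neg_eq_zero.mp h0
end
end
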